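/- Let n ≥ 1 and let A ⊆ Sⁿ be a nonempty compact convex subset containing no pair of antipodal points (i.e., x ∈ A implies −x ∉ A). Then there exists a unit vector v ∈ ℝ^{n+1} such that ⟨x, v⟩ > 0 for every x ∈ A; that is, A is contained in an open hemisphere of Sⁿ. (The simply convex case of Theorem 2.4 of the paper.) -/

import Mathlib

open scoped RealInnerProductSpace

noncomputable section

/-- `Esp n` is `ℝ^{n+1}` with its standard inner product. -/
abbrev Esp (n : ℕ) : Type := EuclideanSpace ℝ (Fin (n + 1))

/-- The unit sphere `Sⁿ ⊆ ℝ^{n+1}`. -/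
def sphereSet (n : ℕ) : Set (Esp n) := {x | ‖x‖ = 1}

/-- A convex segment in `Sⁿ`: `{(cos t)·u + (sin t)·v : 0 ≤ t ≤ a}` for an
orthonormal pair `u, v` and some `a ∈ [0, π]`. -/
def IsConvexSegment {n : ℕ} (S : Set (Esp n)) : Prop :=
  ∃ (u v : Esp n) (a : ℝ), ‖u‖ = 1 ∧ ‖v‖ = 1 ∧ ⟪u, v⟫ = 0 ∧
    0 ≤ a ∧ a ≤ Real.pi ∧
    S = (fun t : ℝ => Real.cos t • u + Real.sin t • v) '' Set.Icc 0 a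

/-- A subset of `Sⁿ` is convex if any two of its points are contained in a
convex segment contained in the set. -/
def SphConvex {n : ℕ} (A : Set (Esp n)) : Prop :=
  ∀ x ∈ A, ∀ y ∈ A, ∃ S : Set (Esp n), IsConvexSegment S ∧ S ⊆ A ∧ x ∈ S ∧ y ∈ S

set_option maxHeartbeats 1000000 in
lemma radial_key {n : ℕ} {A : Set (Esp n)} (hA : A ⊆ sphereSet n)
    (hc : SphConvex A) (hanti : ∀ x ∈ A, -x ∉ A)
    {x y : Esp n} (hx : x ∈ A) (hy : y ∈ A) {lam : ℝ}
    (h0 : 0 ≤ lam) (h1 : lam ≤ 1) :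
    ∃ r : ℝ, 0 < r ∧ r • ((1 - lam) • x + lam • y) ∈ A := by
  obtain ⟨S, ⟨u, v, a, hu, hv, huv, ha0, haπ, hSeq⟩, hSA, hxS, hyS⟩ := hc x hx y hy
  rw [hSeq] at hxS hyS
  obtain ⟨t₁, ht₁, hx'⟩ := hxS
  obtain ⟨t₂, ht₂, hy'⟩ := hyS
  simp only [Set.mem_Icc] at ht₁ ht₂
  set c : ℝ := (1 - lam) * Real.cos t₁ + lam * Real.cos t₂ with hc_def
  set s : ℝ := (1 - lam) * Real.sin t₁ + lam * Real.sin t₂ with hs_def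
  set z : Esp n := (1 - lam) • x + lam • y with hz_def
  have hzuv : z = c • u + s • v := by
    rw [hz_def, ← hx', ← hy']
    simp only [hc_def, hs_def]
    module
  have hsin1 : 0 ≤ Real.sin t₁ := Real.sin_nonneg_of_nonneg_of_le_pi ht₁.1 (ht₁.2.trans haπ)
  have hsin2 : 0 ≤ Real.sin t₂ := Real.sin_nonneg_of_nonneg_of_le_pi ht₂.1 (ht₂.2.trans haπ)
  have hlam1 : 0 ≤ 1 - lam := by linarith
  have hs_nonneg : 0 ≤ s := add_nonneg (mul_nonneg hlam1 hsin1) (mul_nonneg h0 hsin2)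
  have hxn : ‖x‖ = 1 := hA hx
  have hyn : ‖y‖ = 1 := hA hy
  have hz_ne : z ≠ 0 := by
    intro h
    have heq : (1 - lam) • x = lam • (-y) := by
      rw [smul_neg]
      have h' : (1 - lam) • x + lam • y = 0 := h
      linear_combination (norm := module) h'
    have hnorm : (1 - lam) * ‖x‖ = lam * ‖y‖ := by
      have := congrArg norm heq
      rwa [norm_smul, norm_smul, norm_neg, Real.norm_eq_abs, Real.norm_eq_abs,
        abs_of_nonneg hlam1, abs_of_nonneg h0] at this
    rw [hxn, hyn, mul_one, mul_one] at hnorm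
    have hlam : lam = 1/2 := by linarith
    have hxy : x = -y := by
      rw [hlam] at heq
      have h2 : (2:ℝ) • ((1 - 1/2 : ℝ) • x) = (2:ℝ) • ((1/2 : ℝ) • (-y)) := by rw [heq]
      rw [smul_smul, smul_smul] at h2
      norm_num at h2
      exact h2
    exact hanti y hy (hxy ▸ hx)
  have hz_pos : 0 < ‖z‖ := norm_pos_iff.mpr hz_ne
  set r' : ℝ := ‖z‖ with hr'_def
  have hnorm_sq : r' ^ 2 = c ^ 2 + s ^ 2 := by
    have hinner : ⟪c • u, s • v⟫ = 0 := by
      rw [real_inner_smul_left, real_inner_smul_right, huv]; ring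
    have hsq : ‖z‖ ^ 2 = ‖c • u‖ ^ 2 + 2 * ⟪c • u, s • v⟫ + ‖s • v‖ ^ 2 := by
      rw [hzuv, norm_add_sq_real]
    rw [hinner, norm_smul, norm_smul, hu, hv, mul_one, mul_one, Real.norm_eq_abs,
      Real.norm_eq_abs, sq_abs, sq_abs] at hsq
    rw [hr'_def]; linarith
  rcases eq_or_lt_of_le ha0 with ha0' | ha_pos
  · -- a = 0 : x = y = u
    have ht₁0 : t₁ = 0 := le_antisymm (ht₁.2.trans (le_of_eq ha0'.symm)) ht₁.1
    have ht₂0 : t₂ = 0 := le_antisymm (ht₂.2.trans (le_of_eq ha0'.symm)) ht₂.1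
    have hxu : x = u := by rw [← hx', ht₁0]; simp
    have hyu : y = u := by rw [← hy', ht₂0]; simp
    refine ⟨1, one_pos, ?_⟩
    have he : (1:ℝ) • ((1 - lam) • x + lam • y) = x := by rw [hxu, hyu]; module
    rw [he]; exact hx
  · -- a > 0
    set θ : ℝ := Real.arccos (c / r') with hθ_def
    have hc_le : |c| ≤ r' := abs_le_of_sq_le_sq (by nlinarith [sq_nonneg s]) hz_pos.le
    have hdiv_le : c / r' ≤ 1 := (div_le_one hz_pos).mpr ((le_abs_self c).trans hc_le)
    have hdiv_ge : -1 ≤ c / r' := by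
      rw [le_div_iff₀ hz_pos]
      linarith [(abs_le.mp hc_le).1]
    have hcosθ : Real.cos θ = c / r' := Real.cos_arccos hdiv_ge hdiv_le
    have hsinθ : Real.sin θ = s / r' := by
      rw [hθ_def, Real.sin_arccos]
      have h1' : 1 - (c / r') ^ 2 = (s / r') ^ 2 := by
        have hr0 : r' ≠ 0 := hz_pos.ne'
        field_simp
        linarith [hnorm_sq]
      rw [h1', Real.sqrt_sq (by positivity)]
    have hθ0 : 0 ≤ θ := Real.arccos_nonneg _
    have hθπ : θ ≤ Real.pi := Real.arccos_le_pi _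
    have hkey : 0 ≤ Real.sin a * c - Real.cos a * s := by
      have hexp : Real.sin a * c - Real.cos a * s =
          (1 - lam) * Real.sin (a - t₁) + lam * Real.sin (a - t₂) := by
        rw [Real.sin_sub, Real.sin_sub, hc_def, hs_def]; ring
      rw [hexp]
      have h1' : 0 ≤ Real.sin (a - t₁) :=
        Real.sin_nonneg_of_nonneg_of_le_pi (by linarith [ht₁.2]) (by linarith [ht₁.1])
      have h2' : 0 ≤ Real.sin (a - t₂) :=
        Real.sin_nonneg_of_nonneg_of_le_pi (by linarith [ht₂.2]) (by linarith [ht₂.1])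
      exact add_nonneg (mul_nonneg hlam1 h1') (mul_nonneg h0 h2')
    have hθa : θ ≤ a := by
      by_contra hlt
      push_neg at hlt
      have h1' : 0 < Real.sin (θ - a) :=
        Real.sin_pos_of_pos_of_lt_pi (by linarith) (by linarith)
      have h2' : Real.sin (θ - a) = (Real.cos a * s - Real.sin a * c) / r' := by
        rw [Real.sin_sub, hcosθ, hsinθ]; field_simp
      have h3' : Real.cos a * s - Real.sin a * c = Real.sin (θ - a) * r' := by
        rw [h2']; field_simp
      nlinarith
    have hpA : Real.cos θ • u + Real.sin θ • v ∈ A := by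
      apply hSA
      rw [hSeq]
      exact ⟨θ, Set.mem_Icc.mpr ⟨hθ0, hθa⟩, rfl⟩
    refine ⟨r'⁻¹, inv_pos.mpr hz_pos, ?_⟩
    have heq2 : r'⁻¹ • z = Real.cos θ • u + Real.sin θ • v := by
      rw [hzuv, hcosθ, hsinθ, smul_add, smul_smul, smul_smul, div_eq_inv_mul, div_eq_inv_mul]
    rw [heq2]
    exact hpA


lemma isCompact_convexHull_esp {n : ℕ} {A : Set (Esp n)} (hcpt : IsCompact A)
    (hne : A.Nonempty) : IsCompact (convexHull ℝ A) := by
  classical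
  obtain ⟨x₀, hx₀⟩ := hne
  set m : ℕ := n + 2 with hm_def
  set T : Set ((Fin m → ℝ) × (Fin m → Esp n)) :=
    (stdSimplex ℝ (Fin m)) ×ˢ (Set.univ.pi fun _ => A) with hT_def
  have hTcpt : IsCompact T :=
    (isCompact_stdSimplex _ _).prod (isCompact_univ_pi fun _ => hcpt)
  set φ : (Fin m → ℝ) × (Fin m → Esp n) → Esp n := fun p => ∑ i, p.1 i • p.2 i with hφ_def
  have hφc : Continuous φ :=
    continuous_finset_sum _ fun i _ =>
      ((continuous_apply i).comp continuous_fst).smul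
        ((continuous_apply i).comp continuous_snd)
  have himg : convexHull ℝ A = φ '' T := by
    apply Set.Subset.antisymm
    · intro x hx
      obtain ⟨ι, hfin, z, w, hzA, hind, hw_pos, hw_sum, hx_eq⟩ :=
        eq_pos_convex_span_of_mem_convexHull hx
      have hcard : Fintype.card ι ≤ m := by
        have h1 := hind.card_le_finrank_succ
        have h2 : Module.finrank ℝ (vectorSpan ℝ (Set.range z)) ≤ Module.finrank ℝ (Esp n) :=
          Submodule.finrank_le _
        have h3 : Module.finrank ℝ (Esp n) = n + 1 := by simp
        omega
      obtain ⟨F⟩ : Nonempty (ι ↪ Fin m) :=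
        Function.Embedding.nonempty_of_card_le (by simpa using hcard)
      set w' : Fin m → ℝ := fun j => if h : ∃ i, F i = j then w h.choose else 0 with hw'_def
      set z' : Fin m → Esp n := fun j => if h : ∃ i, F i = j then z h.choose else x₀ with hz'_def
      have hw'F : ∀ i, w' (F i) = w i := by
        intro i
        have hex : ∃ i', F i' = F i := ⟨i, rfl⟩
        rw [hw'_def]
        simp only [dif_pos hex]
        exact congrArg w (F.injective hex.choose_spec)
      have hz'F : ∀ i, z' (F i) = z i := by
        intro i
        have hex : ∃ i', F i' = F i := ⟨i, rfl⟩
        rw [hz'_def]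
        simp only [dif_pos hex]
        exact congrArg z (F.injective hex.choose_spec)
      have hsum_gen : ∀ (M : Type) (_ : AddCommMonoid M) (g : Fin m → M)
          (hg : ∀ j, (¬ ∃ i, F i = j) → g j = 0), True := fun _ _ _ _ => trivial
      have himage : ∀ j : Fin m, j ∉ Finset.univ.image F → ¬ ∃ i, F i = j := by
        intro j hj ⟨i, hi⟩
        exact hj (Finset.mem_image.mpr ⟨i, Finset.mem_univ i, hi⟩)
      have hsum_w : ∑ j, w' j = ∑ i, w i := by
        rw [← Finset.sum_subset (Finset.subset_univ (Finset.univ.image F))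
          (fun j _ hj => by rw [hw'_def]; exact dif_neg (himage j hj))]
        rw [Finset.sum_image (fun a _ b _ h => F.injective h)]
        exact Finset.sum_congr rfl fun i _ => hw'F i
      have hsum_wz : ∑ j, w' j • z' j = ∑ i, w i • z i := by
        rw [← Finset.sum_subset (Finset.subset_univ (Finset.univ.image F))
          (fun j _ hj => by
            rw [hw'_def]
            simp only [dif_neg (himage j hj), zero_smul])]
        rw [Finset.sum_image (fun a _ b _ h => F.injective h)]
        exact Finset.sum_congr rfl fun i _ => by rw [hw'F i, hz'F i]
      refine ⟨(w', z'), ⟨⟨?_, ?_⟩, ?_⟩, ?_⟩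
      · intro j
        show (0:ℝ) ≤ w' j
        rw [hw'_def]
        by_cases h : ∃ i, F i = j
        · simp only [dif_pos h]; exact (hw_pos _).le
        · simp only [dif_neg h]; exact le_rfl
      · show ∑ j, w' j = 1
        rw [hsum_w, hw_sum]
      · intro j _
        show z' j ∈ A
        rw [hz'_def]
        by_cases h : ∃ i, F i = j
        · simp only [dif_pos h]; exact hzA (Set.mem_range_self _)
        · simp only [dif_neg h]; exact hx₀
      · show ∑ j, w' j • z' j = x
        rw [hsum_wz, hx_eq]
    · rintro _ ⟨⟨w, g⟩, ⟨hw, hg⟩, rfl⟩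
      exact mem_convexHull_of_exists_fintype w g hw.1 hw.2 (fun i => hg i (Set.mem_univ i)) rfl
  rw [himg]
  exact hTcpt.image hφc

/-- Theorem 2.4 (simply convex case): a nonempty compact convex subset of `Sⁿ`
containing no pair of antipodal points lies in an open hemisphere. -/
theorem sphConvex_no_antipodal_open_hemisphere (n : ℕ) (hn : 1 ≤ n)
    (A : Set (Esp n)) (hA : A ⊆ sphereSet n) (hne : A.Nonempty)
    (hcpt : IsCompact A) (hc : SphConvex A)
    (hanti : ∀ x ∈ A, -x ∉ A) :
    ∃ v : Esp n, ‖v‖ = 1 ∧ ∀ x ∈ A, 0 < ⟪x, v⟫ := by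
  have h0A : (0 : Esp n) ∉ A := by
    intro h
    have : ‖(0 : Esp n)‖ = 1 := hA h
    simp at this
  set C : Set (Esp n) := {z | ∃ r : ℝ, 0 < r ∧ r • z ∈ A} with hC_def
  have hCconv : Convex ℝ C := by
    intro z hz w hw a b ha hb hab
    obtain ⟨rz, hrz, hrzA⟩ := hz
    obtain ⟨rw', hrw, hrwA⟩ := hw
    have hd : (0:ℝ) < rz * b + rw' * a := by
      rcases lt_or_ge 0 a with h | h
      · have h1 := mul_pos hrw h
        have h2 := mul_nonneg hrz.le hb
        linarith
      · have hb' : 0 < b := by linarith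
        have h1 := mul_pos hrz hb'
        have h2 := mul_nonneg hrw.le ha
        linarith
    set d : ℝ := rz * b + rw' * a with hd_def
    set lam : ℝ := rz * b / d with hlam_def
    have hlam0 : 0 ≤ lam := div_nonneg (mul_nonneg hrz.le hb) hd.le
    have hlam1 : lam ≤ 1 := by
      rw [hlam_def, div_le_one hd]
      have := mul_nonneg hrw.le ha
      linarith
    have h1m : 1 - lam = rw' * a / d := by
      rw [hlam_def]
      field_simp
      rw [hd_def]
      ring
    obtain ⟨r, hr, hrA⟩ := radial_key hA hc hanti hrzA hrwA hlam0 hlam1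
    refine ⟨r * rz * rw' / d, by positivity, ?_⟩
    have heq : (r * rz * rw' / d) • (a • z + b • w) =
        r • ((1 - lam) • (rz • z) + lam • (rw' • w)) := by
      rw [h1m, hlam_def]
      match_scalars <;> field_simp [hd.ne'] <;> ring
    rw [heq]
    exact hrA
  have hsubC : convexHull ℝ A ⊆ C :=
    convexHull_min (fun x hx => ⟨1, one_pos, by simpa using hx⟩) hCconv
  have h0K : (0 : Esp n) ∉ convexHull ℝ A := by
    intro h
    obtain ⟨r, hr, hrA⟩ := hsubC h
    rw [smul_zero] at hrA
    exact h0A hrA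
  have hKcpt : IsCompact (convexHull ℝ A) := isCompact_convexHull_esp hcpt hne
  obtain ⟨f, u, hfu, hu0⟩ :=
    geometric_hahn_banach_closed_point (convex_convexHull ℝ A) hKcpt.isClosed h0K
  have hu_neg : u < 0 := by simpa using hu0
  set w : Esp n := (InnerProductSpace.toDual ℝ (Esp n)).symm f with hw_def
  have hwp : ∀ p : Esp n, ⟪w, p⟫ = f p := fun p => InnerProductSpace.toDual_symm_apply
  have hfx : ∀ x ∈ A, f x < 0 := fun x hx => (hfu x (subset_convexHull ℝ A hx)).trans hu_neg
  obtain ⟨x₀, hx₀⟩ := hne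
  have hw_ne : w ≠ 0 := by
    intro h
    have : f x₀ = 0 := by rw [← hwp x₀, h, inner_zero_left]
    linarith [hfx x₀ hx₀]
  have hwnorm : 0 < ‖w‖ := norm_pos_iff.mpr hw_ne
  refine ⟨-(‖w‖⁻¹ • w), ?_, ?_⟩
  · rw [norm_neg, norm_smul, norm_inv, norm_norm, inv_mul_cancel₀ hwnorm.ne']
  · intro x hx
    have h1 : ⟪x, -(‖w‖⁻¹ • w)⟫ = -(‖w‖⁻¹ * f x) := by
      rw [inner_neg_right, real_inner_smul_right, real_inner_comm, hwp x]
    rw [h1]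
    have := hfx x hx
    have h2 : 0 < ‖w‖⁻¹ * (-f x) := mul_pos (inv_pos.mpr hwnorm) (by linarith)
    linarith [h2]
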